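/- Let S be a finite set of rational prime numbers with |S| ≤ 1. Then every solution (x, y) ∈ O^× × O^× of the S-unit equation x + y = 1 belongs to the set {(1/2, 1/2), (2, −1), (−1, 2)}. -/

import Mathlib

/-- `x ∈ ℤ[1/N_S]` (as a subset of `ℚ`), where `N_S = ∏_{p ∈ S} p`. -/
def memSRing (S : Finset ℕ) (x : ℚ) : Prop :=
  ∃ (n : ℤ) (k : ℕ), x = (n : ℚ) / (∏ p ∈ S, (p : ℚ)) ^ k

/-- `x` is a unit of the ring `ℤ[1/N_S] ⊆ ℚ`. -/
def isSUnit (S : Finset ℕ) (x : ℚ) : Prop :=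
  memSRing S x ∧ ∃ y : ℚ, memSRing S y ∧ x * y = 1


lemma pow_add_pow_eq_pow {p a b c : ℕ} (hp : p.Prime) (h : p ^ a + p ^ b = p ^ c) :
    p = 2 ∧ a = b ∧ c = a + 1 := by
  wlog hab : a ≤ b with H
  · obtain ⟨h1, h2, h3⟩ := H hp (by rw [add_comm]; exact h) (le_of_not_ge hab)
    exact ⟨h1, h2.symm, by omega⟩
  have hposa : 0 < p ^ a := pow_pos hp.pos a
  have hac : a ≤ c := by
    have hdvd : p ^ a ∣ p ^ c := by
      rw [← h]; exact Dvd.dvd.add dvd_rfl (pow_dvd_pow p hab)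
    exact (Nat.pow_dvd_pow_iff_le_right hp.one_lt).mp hdvd
  have key : 1 + p ^ (b - a) = p ^ (c - a) := by
    have : p ^ a * (1 + p ^ (b - a)) = p ^ a * p ^ (c - a) := by
      rw [mul_add, mul_one, ← pow_add, ← pow_add]
      rw [Nat.add_sub_cancel' hab, Nat.add_sub_cancel' hac]
      exact h
    exact Nat.eq_of_mul_eq_mul_left hposa this
  rcases Nat.lt_or_ge a b with hlt | hge
  · exfalso
    have hca : 0 < c - a := by
      by_contra hc
      have hc0 : c - a = 0 := by omega
      rw [hc0, pow_zero] at key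
      have : 0 < p ^ (b - a) := pow_pos hp.pos _
      omega
    have h1 : p ∣ p ^ (c - a) := dvd_pow_self p (by omega)
    have h2 : p ∣ p ^ (b - a) := dvd_pow_self p (by omega)
    have hp1 : p ∣ 1 := by
      have h3 : p ∣ p ^ (b - a) + 1 := by rw [add_comm, key]; exact h1
      exact (Nat.dvd_add_right h2).mp h3
    exact absurd (Nat.le_of_dvd one_pos hp1) (by have := hp.one_lt; omega)
  · have hab' : a = b := le_antisymm hab hge
    subst hab'
    rw [Nat.sub_self, pow_zero] at key
    have h2 : p ^ (c - a) = 2 := by omega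
    have hp2 : p = 2 := by
      have hca : c - a ≠ 0 := by intro hca; rw [hca, pow_zero] at h2; omega
      have : p ∣ 2 := h2 ▸ dvd_pow_self p hca
      exact (Nat.prime_dvd_prime_iff_eq hp Nat.prime_two).mp this
    subst hp2
    have hc1 : c - a = 1 := by
      rcases Nat.lt_or_ge (c - a) 2 with h' | h'
      · interval_cases h : (c - a) <;> simp_all
      · exfalso
        have : 2 ^ 2 ≤ 2 ^ (c - a) := Nat.pow_le_pow_right (by omega) h'
        omega
    exact ⟨rfl, rfl, by omega⟩

lemma int_core {p A B C : ℕ} (hp : p.Prime) {ε δ : ℤ}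
    (hε : ε = 1 ∨ ε = -1) (hδ : δ = 1 ∨ δ = -1)
    (h : ε * (p : ℤ) ^ A + δ * (p : ℤ) ^ B = (p : ℤ) ^ C) :
    (ε = 1 ∧ δ = 1 ∧ p = 2 ∧ A = B ∧ C = A + 1) ∨
    (ε = 1 ∧ δ = -1 ∧ p = 2 ∧ B = C ∧ A = C + 1) ∨
    (ε = -1 ∧ δ = 1 ∧ p = 2 ∧ A = C ∧ B = C + 1) := by
  rcases hε with rfl | rfl <;> rcases hδ with rfl | rfl
  · left
    have hnat : p ^ A + p ^ B = p ^ C := by exact_mod_cast (by linarith : (p:ℤ)^A + (p:ℤ)^B = (p:ℤ)^C)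
    obtain ⟨h1, h2, h3⟩ := pow_add_pow_eq_pow hp hnat
    exact ⟨rfl, rfl, h1, h2, h3⟩
  · right; left
    have hnat : p ^ B + p ^ C = p ^ A := by exact_mod_cast (by linarith : (p:ℤ)^B + (p:ℤ)^C = (p:ℤ)^A)
    obtain ⟨h1, h2, h3⟩ := pow_add_pow_eq_pow hp hnat
    exact ⟨rfl, rfl, h1, h2, by omega⟩
  · right; right
    have hnat : p ^ A + p ^ C = p ^ B := by exact_mod_cast (by linarith : (p:ℤ)^A + (p:ℤ)^C = (p:ℤ)^B)
    obtain ⟨h1, h2, h3⟩ := pow_add_pow_eq_pow hp hnat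
    exact ⟨rfl, rfl, h1, h2, by omega⟩
  · exfalso
    have h1 : (0:ℤ) < (p:ℤ)^A := pow_pos (by exact_mod_cast hp.pos) _
    have h2 : (0:ℤ) < (p:ℤ)^B := pow_pos (by exact_mod_cast hp.pos) _
    have h3 : (0:ℤ) < (p:ℤ)^C := pow_pos (by exact_mod_cast hp.pos) _
    linarith

lemma sUnit_structure {p : ℕ} (hp : p.Prime) {x : ℚ} (hx : isSUnit {p} x) :
    ∃ (ε : ℤ) (a k : ℕ), (ε = 1 ∨ ε = -1) ∧ x = (ε : ℚ) * (p : ℚ) ^ a / (p : ℚ) ^ k := by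
  obtain ⟨⟨n, k, hn⟩, x', ⟨n', k', hn'⟩, hxx'⟩ := hx
  rw [Finset.prod_singleton] at hn hn'
  have hp0 : (p : ℚ) ≠ 0 := by exact_mod_cast hp.pos.ne'
  have hmul : (n : ℚ) * (n' : ℚ) = (p : ℚ) ^ (k + k') := by
    rw [hn, hn'] at hxx'
    field_simp at hxx'
    rw [pow_add]; linarith [hxx']
  have hmulz : n * n' = (p : ℤ) ^ (k + k') := by exact_mod_cast hmul
  have hdvd : n.natAbs ∣ p ^ (k + k') := by
    have : (n : ℤ) ∣ (p : ℤ) ^ (k + k') := ⟨n', hmulz.symm⟩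
    have h4 := Int.natAbs_dvd_natAbs.mpr this
    simpa [Int.natAbs_pow] using h4
  obtain ⟨a, ha, hna⟩ := (Nat.dvd_prime_pow hp).mp hdvd
  rcases Int.natAbs_eq n with he | he
  · exact ⟨1, a, k, Or.inl rfl, by rw [hn, he, hna]; push_cast; ring⟩
  · exact ⟨-1, a, k, Or.inr rfl, by rw [hn, he, hna]; push_cast; ring⟩

/-- If `|S| ≤ 1`, then every solution of the `S`-unit equation `x + y = 1` is one of
`(1/2, 1/2)`, `(2, −1)`, `(−1, 2)`. -/
theorem sUnit_equation_small_S (S : Finset ℕ) (hS : ∀ p ∈ S, p.Prime)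
    (hcard : S.card ≤ 1) (x y : ℚ) (hx : isSUnit S x) (hy : isSUnit S y)
    (hxy : x + y = 1) :
    (x = 1/2 ∧ y = 1/2) ∨ (x = 2 ∧ y = -1) ∨ (x = -1 ∧ y = 2) := by
  rcases S.eq_empty_or_nonempty with rfl | ⟨p, hpS⟩
  · -- S empty: x, y are integers and units of ℤ, contradiction
    exfalso
    obtain ⟨⟨n, k, hn⟩, x', ⟨n', k', hn'⟩, hxx'⟩ := hx
    obtain ⟨⟨m, j, hm⟩, y', ⟨m', j', hm'⟩, hyy'⟩ := hy
    simp only [Finset.prod_empty, one_pow, div_one] at hn hn' hm hm'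
    subst hn hn' hm hm'
    have h1 : n * n' = 1 := by exact_mod_cast hxx'
    have h2 : m * m' = 1 := by exact_mod_cast hyy'
    have hn1 : n = 1 ∨ n = -1 := Int.isUnit_iff.mp (IsUnit.of_mul_eq_one _ h1)
    have hm1 : m = 1 ∨ m = -1 := Int.isUnit_iff.mp (IsUnit.of_mul_eq_one _ h2)
    have : (n : ℚ) + (m : ℚ) = 1 := hxy
    have : n + m = 1 := by exact_mod_cast this
    rcases hn1 with rfl | rfl <;> rcases hm1 with rfl | rfl <;> omega
  · have hSp : S = {p} := by
      apply Finset.eq_singleton_iff_unique_mem.mpr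
      exact ⟨hpS, fun q hq => Finset.card_le_one.mp hcard q hq p hpS⟩
    subst hSp
    have hp : p.Prime := hS p hpS
    have hp0 : (p : ℚ) ≠ 0 := by exact_mod_cast hp.pos.ne'
    obtain ⟨ε, a, k, hε, hxv⟩ := sUnit_structure hp hx
    obtain ⟨δ, b, j, hδ, hyv⟩ := sUnit_structure hp hy
    rw [hxv, hyv] at hxy
    have heq : (ε : ℚ) * (p:ℚ) ^ (a + j) + (δ : ℚ) * (p:ℚ) ^ (b + k) = (p:ℚ) ^ (k + j) := by
      field_simp at hxy
      rw [pow_add, pow_add, pow_add]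
      ring_nf
      ring_nf at hxy
      linarith [hxy]
    have heqz : ε * (p:ℤ) ^ (a + j) + δ * (p:ℤ) ^ (b + k) = (p:ℤ) ^ (k + j) := by
      exact_mod_cast heq
    rcases int_core hp hε hδ heqz with ⟨he, hd, hp2, hAB, hC⟩ | ⟨he, hd, hp2, hAB, hC⟩ | ⟨he, hd, hp2, hAB, hC⟩
    · left
      subst he hd hp2
      have hk : k = a + 1 := by omega
      have hj : j = b + 1 := by omega
      constructor
      · rw [hxv, hk]; push_cast; rw [pow_succ]; field_simp
      · rw [hyv, hj]; push_cast; rw [pow_succ]; field_simp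
    · right; left
      subst he hd hp2
      have ha : a = k + 1 := by omega
      have hb : b = j := by omega
      constructor
      · rw [hxv, ha]; push_cast; rw [pow_succ]; field_simp
      · rw [hyv, hb]; push_cast; field_simp
    · right; right
      subst he hd hp2
      have ha : a = k := by omega
      have hb : b = j + 1 := by omega
      constructor
      · rw [hxv, ha]; push_cast; field_simp
      · rw [hyv, hb]; push_cast; rw [pow_succ]; field_simp
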